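/- Let q = p^h and fix an integer e with 0 ≤ e ≤ h−1. Suppose one of the following conditions holds: (1) p is even; (2) p is odd, h/gcd(e,h) is odd, and (p^h−1)/2 is even; (3) p is odd, h/gcd(e,h) is even, and (p^{gcd(e,h)}+1) divides (p^h−1)/2. If, in addition, there exist α_1, α_2, α_3 ∈ F_q \ {0} with α_1^{p^e+1} + α_2^{p^e+1} + α_3^{p^e+1} = 0, then for every integer i ≥ 1 there exist β_1, β_2, …, β_{2i+1} ∈ F_q \ {0} such that β_1^{p^e+1} + β_2^{p^e+1} + ⋯ + β_{2i+1}^{p^e+1} = 0. -/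

import Mathlib

open Finset

variable {F : Type*}

/-- The `e`-Galois dual of a linear code `C ⊆ F_q^n` (`q = p^h`):
`C^{⊥_e} = {x | ∀ c ∈ C, ∑ i, x i * (c i)^(p^e) = 0}`. -/
def galoisDual [Field F] (p e : ℕ) {n : ℕ} (C : Submodule F (Fin n → F)) :
    Submodule F (Fin n → F) where
  carrier := {x | ∀ c ∈ C, ∑ i, x i * c i ^ p ^ e = 0}
  add_mem' := by
    intro a b ha hb c hc
    have h1 := ha c hc
    have h2 := hb c hc
    try simp only [Set.mem_ofPred_eq] at h1 h2 ⊢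
    simp only [Pi.add_apply, add_mul, Finset.sum_add_distrib, h1, h2, add_zero]
  zero_mem' := by
    intro c hc
    simp
  smul_mem' := by
    intro r a ha c hc
    have h1 := ha c hc
    try simp only [Set.mem_ofPred_eq] at h1 ⊢
    simp only [Pi.smul_apply, smul_eq_mul, mul_assoc, ← Finset.mul_sum, h1, mul_zero]

/-- The `e`-Galois hull of `C`: `Hull_e(C) = C ∩ C^{⊥_e}`. -/
def galoisHull [Field F] (p e : ℕ) {n : ℕ} (C : Submodule F (Fin n → F)) :
    Submodule F (Fin n → F) :=
  C ⊓ galoisDual p e C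

/-- `G` is a generator matrix of `C`: its rows form a basis of `C`. -/
def IsGenMatrix [Field F] {n k : ℕ} (C : Submodule F (Fin n → F))
    (G : Matrix (Fin k) (Fin n) F) : Prop :=
  LinearIndependent F (fun i : Fin k => G i) ∧
    Submodule.span F (Set.range fun i : Fin k => G i) = C

/-- `d` is the minimum (Hamming) distance of the linear code `C`. -/
def IsMinDist [Field F] [DecidableEq F] {n : ℕ} (C : Submodule F (Fin n → F)) (d : ℕ) : Prop :=
  (∃ c ∈ C, c ≠ 0 ∧ hammingNorm c = d) ∧ ∀ c ∈ C, c ≠ 0 → d ≤ hammingNorm c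

-- gcd(2e, h) computation
lemma my_gcd_two_mul_odd {e h : ℕ} (hh : 0 < h) (hodd : Odd (h / Nat.gcd e h)) :
    Nat.gcd (2 * e) h = Nat.gcd e h := by
  set d := Nat.gcd e h with hd
  have hdpos : 0 < d := Nat.gcd_pos_of_pos_right e hh
  have hde : d ∣ e := Nat.gcd_dvd_left e h
  have hdh : d ∣ h := Nat.gcd_dvd_right e h
  obtain ⟨a, ha⟩ := hde
  obtain ⟨b, hb⟩ := hdh
  have hab : Nat.Coprime a b := by
    have := Nat.coprime_div_gcd_div_gcd (m := e) (n := h) hdpos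
    rwa [← hd, ha, hb, Nat.mul_div_cancel_left _ hdpos, Nat.mul_div_cancel_left _ hdpos] at this
  have hbodd : Odd b := by rwa [hb, Nat.mul_div_cancel_left _ hdpos] at hodd
  have : Nat.gcd (2 * e) h = d * Nat.gcd (2 * a) b := by
    rw [ha, hb, show 2 * (d * a) = d * (2 * a) by ring, Nat.gcd_mul_left]
  rw [this, Nat.Coprime.gcd_mul_left_cancel a hbodd.coprime_two_left, hab]
  omega

lemma my_gcd_two_mul_even {e h : ℕ} (hh : 0 < h) (heven : Even (h / Nat.gcd e h)) :
    Nat.gcd (2 * e) h = 2 * Nat.gcd e h ∧ Odd (e / Nat.gcd e h) := by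
  set d := Nat.gcd e h with hd
  have hdpos : 0 < d := Nat.gcd_pos_of_pos_right e hh
  have hde : d ∣ e := Nat.gcd_dvd_left e h
  have hdh : d ∣ h := Nat.gcd_dvd_right e h
  obtain ⟨a, ha⟩ := hde
  obtain ⟨b, hb⟩ := hdh
  have hab : Nat.Coprime a b := by
    have := Nat.coprime_div_gcd_div_gcd (m := e) (n := h) hdpos
    rwa [← hd, ha, hb, Nat.mul_div_cancel_left _ hdpos, Nat.mul_div_cancel_left _ hdpos] at this
  have hbeven : Even b := by rwa [hb, Nat.mul_div_cancel_left _ hdpos] at heven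
  obtain ⟨b', hb'⟩ := hbeven
  have hb2 : b = 2 * b' := by omega
  have haodd : Odd a := by
    rcases Nat.even_or_odd a with hae | hao
    · exfalso
      have h2 : 2 ∣ Nat.gcd a b := Nat.dvd_gcd hae.two_dvd (by omega)
      rw [hab] at h2; omega
    · exact hao
  constructor
  · have h1 : Nat.gcd (2 * e) h = d * Nat.gcd (2 * a) b := by
      rw [ha, hb, show 2 * (d * a) = d * (2 * a) by ring, Nat.gcd_mul_left]
    have h2 : Nat.gcd (2 * a) b = 2 * Nat.gcd a b' := by
      rw [hb2, Nat.gcd_mul_left]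
    have h3 : Nat.gcd a b' = 1 := by
      have : Nat.gcd a b' ∣ Nat.gcd a b := Nat.dvd_gcd (Nat.gcd_dvd_left _ _)
        ((Nat.gcd_dvd_right a b').trans ⟨2, by omega⟩)
      rw [hab] at this
      exact Nat.eq_one_of_dvd_one this
    rw [h1, h2, h3]; ring
  · rwa [ha, Nat.mul_div_cancel_left _ hdpos]


lemma my_gcd_dvd_half {p h e : ℕ} (hp : 1 < p) (hh : 0 < h)
    (hcase : (Odd (h / Nat.gcd e h) ∧ Even ((p ^ h - 1) / 2)) ∨
             (Even (h / Nat.gcd e h) ∧ (p ^ Nat.gcd e h + 1) ∣ ((p ^ h - 1) / 2))) :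
    Nat.gcd (p ^ e + 1) (p ^ h - 1) ∣ (p ^ h - 1) / 2 := by
  set d := Nat.gcd e h with hd
  have hdpos : 0 < d := Nat.gcd_pos_of_pos_right e hh
  set t := Nat.gcd (p ^ e + 1) (p ^ h - 1) with ht
  have ht1 : t ∣ p ^ e + 1 := Nat.gcd_dvd_left _ _
  have ht2 : t ∣ p ^ h - 1 := Nat.gcd_dvd_right _ _
  have htpos : 0 < t := Nat.gcd_pos_of_pos_left _ (by positivity)
  haveI : NeZero t := ⟨htpos.ne'⟩
  have hph1 : 1 ≤ p ^ h := Nat.one_le_pow _ _ (by omega)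
  have hpe1 : 1 ≤ p ^ e := Nat.one_le_pow _ _ (by omega)
  set x : ZMod t := (p : ZMod t) with hx
  have hxe : x ^ e = -1 := by
    have : ((p ^ e + 1 : ℕ) : ZMod t) = 0 := (ZMod.natCast_eq_zero_iff _ _).2 ht1
    push_cast at this
    linear_combination this
  have hxh : x ^ h = 1 := by
    have : ((p ^ h - 1 : ℕ) : ZMod t) = 0 := (ZMod.natCast_eq_zero_iff _ _).2 ht2
    rw [Nat.cast_sub hph1] at this
    push_cast at this
    linear_combination this
  have hx2e : x ^ (2 * e) = 1 := by
    rw [two_mul, pow_add, hxe]; ring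
  have hxg : x ^ Nat.gcd (2 * e) h = 1 := pow_gcd_eq_one.2 ⟨hx2e, hxh⟩
  rcases hcase with ⟨hodd, heven⟩ | ⟨heven, hdvd⟩
  · -- case 2: gcd(2e,h) = d, so x^d = 1, so x^e = 1, so t ∣ 2
    rw [my_gcd_two_mul_odd hh hodd, ← hd] at hxg
    have hde : d ∣ e := Nat.gcd_dvd_left e h
    obtain ⟨a, ha⟩ := hde
    have hxe1 : x ^ e = 1 := by rw [ha, pow_mul, hxg, one_pow]
    have h2 : ((2 : ℕ) : ZMod t) = 0 := by
      have := hxe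
      rw [hxe1] at this
      push_cast
      linear_combination this
    have ht2' : t ∣ 2 := (ZMod.natCast_eq_zero_iff _ _).1 h2
    exact ht2'.trans heven.two_dvd
  · -- case 3: gcd(2e,h) = 2d, e/d odd, so x^d = -1, so t ∣ p^d + 1
    obtain ⟨hg, haodd⟩ := my_gcd_two_mul_even hh heven
    rw [hg, ← hd] at hxg
    have hde : d ∣ e := Nat.gcd_dvd_left e h
    obtain ⟨a, ha⟩ := hde
    have ha' : a = e / d := by rw [ha, Nat.mul_div_cancel_left _ hdpos]
    rw [← ha'] at haodd
    obtain ⟨j, hj⟩ := haodd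
    have hxd : x ^ d = -1 := by
      have : x ^ e = (x ^ (2 * d)) ^ j * x ^ d := by
        rw [← pow_mul, ← pow_add, ha, hj]; ring_nf
      rw [hxe, hxg, one_pow, one_mul] at this
      exact this.symm
    have hpd : ((p ^ d + 1 : ℕ) : ZMod t) = 0 := by
      push_cast
      linear_combination hxd
    have : t ∣ p ^ d + 1 := (ZMod.natCast_eq_zero_iff _ _).1 hpd
    exact this.trans hdvd


lemma my_exists_pow_eq_neg_one {F : Type*} [Field F] [Fintype F] (m : ℕ)
    (hq : Odd (Fintype.card F))
    (hdvd : Nat.gcd m (Fintype.card F - 1) ∣ ((Fintype.card F - 1) / 2)) :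
    ∃ c : F, c ≠ 0 ∧ c ^ m = -1 := by
  classical
  obtain ⟨ζ, hζ⟩ := IsCyclic.exists_generator (α := Fˣ)
  set N := Fintype.card F - 1 with hN
  have hq2 : 2 ≤ Fintype.card F := Fintype.one_lt_card
  have hq3 : 3 ≤ Fintype.card F := by
    rcases hq with ⟨k, hk⟩; omega
  have hNeven : 2 ∣ N := by
    rcases hq with ⟨k, hk⟩; omega
  have hN2 : 2 ≤ N := by omega
  have hcardu : Fintype.card Fˣ = N := by
    rw [Fintype.card_units, hN]
  have hordζ : orderOf ζ = N := by
    rw [orderOf_eq_card_of_forall_mem_zpowers hζ, Nat.card_eq_fintype_card, hcardu]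
  have hzN : ζ ^ N = 1 := by rw [← hordζ, pow_orderOf_eq_one]
  -- u = ζ^(N/2) = -1
  have hu2 : (ζ ^ (N / 2)) ^ 2 = 1 := by
    rw [← pow_mul, Nat.div_mul_cancel hNeven, hzN]
  have hune : ζ ^ (N / 2) ≠ 1 := by
    intro hcon
    have h1 := orderOf_dvd_of_pow_eq_one hcon
    rw [hordζ] at h1
    have := Nat.le_of_dvd (by omega) h1
    omega
  have huneg : ((ζ ^ (N / 2) : Fˣ) : F) = -1 := by
    have h2 : ((ζ ^ (N / 2) : Fˣ) : F) ^ 2 = 1 := by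
      rw [← Units.val_pow_eq_pow_val, hu2, Units.val_one]
    have hfac : (((ζ ^ (N / 2) : Fˣ) : F) - 1) * (((ζ ^ (N / 2) : Fˣ) : F) + 1) = 0 := by
      linear_combination h2
    rcases mul_eq_zero.1 hfac with hc | hc
    · exact absurd (Units.ext (by rw [Units.val_one]; exact sub_eq_zero.1 hc)) hune
    · exact eq_neg_of_add_eq_zero_left hc
  -- Bezout
  obtain ⟨k, hk⟩ := hdvd
  set g := Nat.gcd m N with hg
  set a := Nat.gcdA m N with ha
  set b := Nat.gcdB m N with hb
  have hbez : (g : ℤ) = m * a + N * b := Nat.gcd_eq_gcd_ab m N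
  have hzNz : ζ ^ (N : ℤ) = 1 := by rw [zpow_natCast, hzN]
  refine ⟨((ζ ^ (a * k) : Fˣ) : F), Units.ne_zero _, ?_⟩
  have key : (ζ ^ (a * (k : ℤ))) ^ m = ζ ^ ((N / 2 : ℕ) : ℤ) := by
    rw [← zpow_natCast (ζ ^ (a * (k : ℤ))) m, ← zpow_mul]
    have hexp : a * (k : ℤ) * m = ((N / 2 : ℕ) : ℤ) - N * (b * k) := by
      have hk' : ((N / 2 : ℕ) : ℤ) = (g : ℤ) * k := by exact_mod_cast hk
      rw [hk', hbez]; ring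
    rw [hexp, zpow_sub, zpow_mul, hzNz, one_zpow, inv_one, mul_one]
  have : ((ζ ^ (a * (k : ℤ)) : Fˣ) : F) ^ m = -1 := by
    rw [← Units.val_pow_eq_pow_val, key, zpow_natCast, huneg]
  exact this



lemma my_extend {F : Type*} [Field F] (m : ℕ) (c : F) (hc : c ≠ 0) (hcm : c ^ m = -1)
    (α : Fin 3 → F) (hα : ∀ j, α j ≠ 0) (hs : ∑ j, α j ^ m = 0) :
    ∀ n : ℕ, ∃ β : Fin (2 * n + 3) → F, (∀ j, β j ≠ 0) ∧ ∑ j, β j ^ m = 0 := by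
  intro n
  induction n with
  | zero => exact ⟨α, hα, hs⟩
  | succ n ih =>
    obtain ⟨β, hβ, hsum⟩ := ih
    refine ⟨Fin.cons c (Fin.cons 1 β), ?_, ?_⟩
    · intro j
      refine Fin.cases ?_ (fun j' => ?_) j
      · simpa using hc
      · refine Fin.cases ?_ (fun j'' => ?_) j'
        · simp
        · simpa using hβ j''
    · rw [Fin.sum_univ_succ]
      simp only [Fin.cons_zero, Fin.cons_succ]
      rw [Fin.sum_univ_succ]
      simp only [Fin.cons_zero, Fin.cons_succ]
      rw [hcm, one_pow, show ∑ x : Fin (2 * (n + 1) + 1), β x ^ m = (0 : F) from hsum]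
      ring

/-- Theorem: under one of the conditions (1) `p` even; (2) `p` odd, `h/gcd(e,h)` odd and
`(p^h-1)/2` even; (3) `p` odd, `h/gcd(e,h)` even and `(p^{gcd(e,h)}+1) ∣ (p^h-1)/2`,
if moreover `α₁^{p^e+1} + α₂^{p^e+1} + α₃^{p^e+1} = 0` for some nonzero `α₁,α₂,α₃`, then for
every `i ≥ 1` there exist `β₁,…,β_{2i+1} ∈ F_q^*` with `∑ β_j^{p^e+1} = 0`. -/
theorem exists_odd_family_sum_pow_eq_zero
    (p h : ℕ) (hp : p.Prime) (hh : 0 < h)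
    [Field F] [Fintype F] (hcard : Fintype.card F = p ^ h)
    (e : ℕ) (he : e ≤ h - 1)
    (hcond : Even p ∨
      (Odd p ∧ Odd (h / Nat.gcd e h) ∧ Even ((p ^ h - 1) / 2)) ∨
      (Odd p ∧ Even (h / Nat.gcd e h) ∧ (p ^ Nat.gcd e h + 1) ∣ ((p ^ h - 1) / 2)))
    (α₁ α₂ α₃ : F) (hα₁ : α₁ ≠ 0) (hα₂ : α₂ ≠ 0) (hα₃ : α₃ ≠ 0)
    (hsum : α₁ ^ (p ^ e + 1) + α₂ ^ (p ^ e + 1) + α₃ ^ (p ^ e + 1) = 0) :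
    ∀ i : ℕ, 1 ≤ i → ∃ β : Fin (2 * i + 1) → F,
      (∀ j, β j ≠ 0) ∧ ∑ j, β j ^ (p ^ e + 1) = 0 := by
  classical
  set m := p ^ e + 1 with hm
  have hcF : ∃ c : F, c ≠ 0 ∧ c ^ m = -1 := by
    rcases hcond with hpe | hrest
    · -- p even, char 2
      have hp2 : p = 2 := (Nat.Prime.even_iff hp).1 hpe
      have hcast : ((p ^ h : ℕ) : F) = 0 := by
        rw [← hcard]; exact FiniteField.cast_card_eq_zero F
      push_cast at hcast
      have hpz : (p : F) = 0 := pow_eq_zero_iff hh.ne' |>.1 hcast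
      rw [hp2] at hpz
      refine ⟨1, one_ne_zero, ?_⟩
      rw [one_pow]
      push_cast at hpz
      linear_combination hpz
    · have hpodd : Odd p := by rcases hrest with ⟨h1, _, _⟩ | ⟨h1, _, _⟩ <;> exact h1
      have hqodd : Odd (Fintype.card F) := by rw [hcard]; exact hpodd.pow
      have hdvd : Nat.gcd m (Fintype.card F - 1) ∣ ((Fintype.card F - 1) / 2) := by
        rw [hcard, hm]
        apply my_gcd_dvd_half hp.one_lt hh
        rcases hrest with ⟨_, h2, h3⟩ | ⟨_, h2, h3⟩
        · exact Or.inl ⟨h2, h3⟩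
        · exact Or.inr ⟨h2, h3⟩
      exact my_exists_pow_eq_neg_one m hqodd hdvd
  obtain ⟨c, hc, hcm⟩ := hcF
  have hα : ∀ j, ![α₁, α₂, α₃] j ≠ 0 := by
    intro j; fin_cases j <;> simpa
  have hs : ∑ j, ![α₁, α₂, α₃] j ^ m = 0 := by
    rw [Fin.sum_univ_three]
    simpa using hsum
  intro i hi
  obtain ⟨n, rfl⟩ := Nat.exists_eq_succ_of_ne_zero (by omega : i ≠ 0)
  exact my_extend m c hc hcm ![α₁, α₂, α₃] hα hs n
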